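/- Let (b_k) be a sequence of reals with b_k ∈ [0, B], and define a_k = Σ_{i=1}^k b_i². Then Σ_{k=1}^N b_k²/√(a_k + ε) ≤ 2√(a_N + ε) for any ε > 0. -/
import Mathlib

lemma adagrad_key (s t : ℝ) (hs : 0 < s) (hst : s ≤ t) :
    (t - s) / Real.sqrt t ≤ 2 * (Real.sqrt t - Real.sqrt s) := by
  have ht : 0 < t := lt_of_lt_of_le hs hst
  have hsq : 0 < Real.sqrt t := Real.sqrt_pos.mpr ht
  rw [div_le_iff₀ hsq]
  have h1 : Real.sqrt s * Real.sqrt s = s := Real.mul_self_sqrt hs.le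
  have h2 : Real.sqrt t * Real.sqrt t = t := Real.mul_self_sqrt ht.le
  nlinarith [sq_nonneg (Real.sqrt t - Real.sqrt s)]

/-- Key AdaGrad summation lemma: if `b_k ∈ [0, B]` and
`a_k = Σ_{i=1}^k b_i²`, then `Σ_{k=1}^N b_k²/√(a_k + ε) ≤ 2√(a_N + ε)`
for any `ε > 0`. -/
theorem adagrad_sum_lemma (b : ℕ → ℝ) (a : ℕ → ℝ) (B ε : ℝ) (N : ℕ)
    (hb : ∀ k, b k ∈ Set.Icc 0 B)
    (ha : ∀ k, a k = ∑ i ∈ Finset.Icc 1 k, (b i) ^ 2)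
    (hε : 0 < ε) :
    ∑ k ∈ Finset.Icc 1 N, (b k) ^ 2 / Real.sqrt (a k + ε)
      ≤ 2 * Real.sqrt (a N + ε) := by
  have hanonneg : ∀ k, 0 ≤ a k := by
    intro k
    rw [ha k]
    exact Finset.sum_nonneg fun i _ => sq_nonneg _
  induction N with
  | zero =>
    simp
  | succ n ih =>
    rw [Finset.sum_Icc_succ_top (by omega)]
    have hstep : a (n + 1) = a n + (b (n + 1)) ^ 2 := by
      rw [ha, ha, Finset.sum_Icc_succ_top (by omega)]
    have hkey : (b (n + 1)) ^ 2 / Real.sqrt (a (n + 1) + ε)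
        ≤ 2 * (Real.sqrt (a (n + 1) + ε) - Real.sqrt (a n + ε)) := by
      have := adagrad_key (a n + ε) (a (n + 1) + ε)
        (by have := hanonneg n; linarith)
        (by rw [hstep]; nlinarith [sq_nonneg (b (n + 1))])
      have heq : a (n + 1) + ε - (a n + ε) = (b (n + 1)) ^ 2 := by
        rw [hstep]; ring
      rwa [heq] at this
    linarith
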